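/- The Mayers–Yao correlator C = [[1, 0, 1/√2],[0, 1, 1/√2],[1/√2, 1/√2, 1]] has a unique PSD completion in E₆, namely the 6×6 matrix Ĉ = [[M, M],[M, M]] where M = [[1, 0, 1/√2],[0, 1, 1/√2],[1/√2, 1/√2, 1]]; moreover C is an extreme point of Cor(3,3). -/

import Mathlib

open Matrix Real
open scoped RealInnerProductSpace

/-- The set of quantum correlation matrices (Tsirelson): `n × m` real matrices whose entries
are inner products of unit vectors in `ℝ^{n+m}`. -/
def Cor (n m : ℕ) : Set (Matrix (Fin n) (Fin m) ℝ) :=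
  {C | ∃ u : Fin n → EuclideanSpace ℝ (Fin (n + m)),
       ∃ v : Fin m → EuclideanSpace ℝ (Fin (n + m)),
       (∀ x, ‖u x‖ = 1) ∧ (∀ y, ‖v y‖ = 1) ∧
       ∀ x y, C x y = ⟪u x, v y⟫}

/-- The elliptope: PSD matrices with unit diagonal. -/
def Elliptope (k : ℕ) : Set (Matrix (Fin k) (Fin k) ℝ) :=
  {X | X.PosSemidef ∧ ∀ i, X i i = 1}

/-- `X` is a PSD completion of `C`. -/
def IsPSDCompletion (n m : ℕ) (X : Matrix (Fin (n + m)) (Fin (n + m)) ℝ)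
    (C : Matrix (Fin n) (Fin m) ℝ) : Prop :=
  X ∈ Elliptope (n + m) ∧ ∀ x y, X (Fin.castAdd m x) (Fin.natAdd n y) = C x y

/-- `C` is an extreme point of the convex set `S`. -/
def IsExtremePt {E : Type*} [AddCommMonoid E] [Module ℝ E] (S : Set E) (C : E) : Prop :=
  C ∈ S ∧ ∀ C₁ ∈ S, ∀ C₂ ∈ S, ∀ l : ℝ, 0 < l → l < 1 →
    C = l • C₁ + (1 - l) • C₂ → C₁ = C ∧ C₂ = C

/--  is a PSD completion of the  matrix . -/
def IsPSDCompletion33 (X : Matrix (Fin 6) (Fin 6) ℝ)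
    (C : Matrix (Fin 3) (Fin 3) ℝ) : Prop :=
  X.PosSemidef ∧ (∀ i, X i i = 1) ∧
  X 0 3 = C 0 0 ∧ X 0 4 = C 0 1 ∧ X 0 5 = C 0 2 ∧
  X 1 3 = C 1 0 ∧ X 1 4 = C 1 1 ∧ X 1 5 = C 1 2 ∧
  X 2 3 = C 2 0 ∧ X 2 4 = C 2 1 ∧ X 2 5 = C 2 2

/-- The Mayers–Yao correlator. -/
noncomputable def MY : Matrix (Fin 3) (Fin 3) ℝ :=
  !![1, 0, 1 / Real.sqrt 2;
     0, 1, 1 / Real.sqrt 2;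
     1 / Real.sqrt 2, 1 / Real.sqrt 2, 1]

/-- Its unique PSD completion: the block matrix [[M, M], [M, M]] with M = MY. -/
noncomputable def MYhat : Matrix (Fin 6) (Fin 6) ℝ :=
  Matrix.of fun i j : Fin 6 => MY ⟨i.val % 3, by omega⟩ ⟨j.val % 3, by omega⟩


lemma cv0 {α : Type*} (a b c d e f : α) : (![a,b,c,d,e,f]) 0 = a := rfl
lemma cv1 {α : Type*} (a b c d e f : α) : (![a,b,c,d,e,f]) 1 = b := rfl
lemma cv2 {α : Type*} (a b c d e f : α) : (![a,b,c,d,e,f]) 2 = c := rfl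
lemma cv3 {α : Type*} (a b c d e f : α) : (![a,b,c,d,e,f]) 3 = d := rfl
lemma cv4 {α : Type*} (a b c d e f : α) : (![a,b,c,d,e,f]) 4 = e := rfl
lemma cv5 {α : Type*} (a b c d e f : α) : (![a,b,c,d,e,f]) 5 = f := rfl

lemma hhalf : (1/Real.sqrt 2) * (1/Real.sqrt 2) = 1/2 := by
  rw [div_mul_div_comm, Real.mul_self_sqrt (by norm_num)]; norm_num

lemma myhat_quad (x : Fin 6 → ℝ) :
    star x ⬝ᵥ MYhat *ᵥ x =
      (x 0 + x 3 + (x 2 + x 5) * (1/Real.sqrt 2))^2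
      + (x 1 + x 4 + (x 2 + x 5) * (1/Real.sqrt 2))^2 := by
  simp only [dotProduct, Matrix.mulVec, Fin.sum_univ_six, Pi.star_apply, star_trivial]
  rw [show MYhat 0 0 = 1 from rfl, show MYhat 0 1 = 0 from rfl,
      show MYhat 0 2 = 1/Real.sqrt 2 from rfl, show MYhat 0 3 = 1 from rfl,
      show MYhat 0 4 = 0 from rfl, show MYhat 0 5 = 1/Real.sqrt 2 from rfl,
      show MYhat 1 0 = 0 from rfl, show MYhat 1 1 = 1 from rfl,
      show MYhat 1 2 = 1/Real.sqrt 2 from rfl, show MYhat 1 3 = 0 from rfl,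
      show MYhat 1 4 = 1 from rfl, show MYhat 1 5 = 1/Real.sqrt 2 from rfl,
      show MYhat 2 0 = 1/Real.sqrt 2 from rfl, show MYhat 2 1 = 1/Real.sqrt 2 from rfl,
      show MYhat 2 2 = 1 from rfl, show MYhat 2 3 = 1/Real.sqrt 2 from rfl,
      show MYhat 2 4 = 1/Real.sqrt 2 from rfl, show MYhat 2 5 = 1 from rfl,
      show MYhat 3 0 = 1 from rfl, show MYhat 3 1 = 0 from rfl,
      show MYhat 3 2 = 1/Real.sqrt 2 from rfl, show MYhat 3 3 = 1 from rfl,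
      show MYhat 3 4 = 0 from rfl, show MYhat 3 5 = 1/Real.sqrt 2 from rfl,
      show MYhat 4 0 = 0 from rfl, show MYhat 4 1 = 1 from rfl,
      show MYhat 4 2 = 1/Real.sqrt 2 from rfl, show MYhat 4 3 = 0 from rfl,
      show MYhat 4 4 = 1 from rfl, show MYhat 4 5 = 1/Real.sqrt 2 from rfl,
      show MYhat 5 0 = 1/Real.sqrt 2 from rfl, show MYhat 5 1 = 1/Real.sqrt 2 from rfl,
      show MYhat 5 2 = 1 from rfl, show MYhat 5 3 = 1/Real.sqrt 2 from rfl,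
      show MYhat 5 4 = 1/Real.sqrt 2 from rfl, show MYhat 5 5 = 1 from rfl]
  linear_combination (-2 * (x 2 + x 5)^2) * hhalf

lemma myhat_psd : MYhat.PosSemidef := by
  apply PosSemidef.of_dotProduct_mulVec_nonneg
  · ext i j
    fin_cases i <;> fin_cases j <;> rfl
  · intro x
    rw [myhat_quad x]
    positivity

/-- If a PSD matrix with unit diagonal has an entry equal to 1, the corresponding
columns coincide. -/
lemma ones_force {n : ℕ} {X : Matrix (Fin n) (Fin n) ℝ} (hPSD : X.PosSemidef)
    (hd : ∀ i, X i i = 1) {p q : Fin n} (hpq : X p q = 1) : ∀ k, X k p = X k q := by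
  have hsym : ∀ i j, X i j = X j i := fun i j => by
    have := hPSD.1.apply i j; simpa using this.symm
  set v : Fin n → ℝ := Pi.single p 1 - Pi.single q 1 with hv
  have e1 : X *ᵥ v = fun k => X k p - X k q := by
    funext k
    simp [hv, Matrix.mulVec_sub, Matrix.mulVec_single]
  have hq0 : star v ⬝ᵥ X *ᵥ v = 0 := by
    have hsv : star v = v := by
      funext i; simp [hv]
    rw [hsv, e1, hv]
    simp only [sub_dotProduct, single_dotProduct, one_mul]
    rw [hd p, hd q, hpq, hsym q p, hpq]
    ring
  have hker := (hPSD.dotProduct_mulVec_zero_iff v).mp hq0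
  intro k
  have := congrFun hker k
  rw [e1] at this
  simpa [sub_eq_zero] using this

lemma entries_done (X : Matrix (Fin 6) (Fin 6) ℝ)
    (hsym : ∀ i j, X i j = X j i) (hd : ∀ i, X i i = 1)
    (e0 : ∀ k, X k 0 = X k 3) (e1 : ∀ k, X k 1 = X k 4) (e2 : ∀ k, X k 2 = X k 5)
    (h01 : X 0 1 = 0) (h02 : X 0 2 = 1 / Real.sqrt 2) (h12 : X 1 2 = 1 / Real.sqrt 2) :
    X = MYhat := by
  have hE00 : X 0 0 = MYhat 0 0 := by exact hd 0
  have hE01 : X 0 1 = MYhat 0 1 := by exact h01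
  have hE02 : X 0 2 = MYhat 0 2 := by exact h02
  have hE03 : X 0 3 = MYhat 0 3 := by rw [← e0 0]; exact hd 0
  have hE04 : X 0 4 = MYhat 0 4 := by rw [← e1 0]; exact h01
  have hE05 : X 0 5 = MYhat 0 5 := by rw [← e2 0]; exact h02
  have hE10 : X 1 0 = MYhat 1 0 := by rw [hsym 1 0]; exact h01
  have hE11 : X 1 1 = MYhat 1 1 := by exact hd 1
  have hE12 : X 1 2 = MYhat 1 2 := by exact h12
  have hE13 : X 1 3 = MYhat 1 3 := by rw [← e0 1]; rw [hsym 1 0]; exact h01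
  have hE14 : X 1 4 = MYhat 1 4 := by rw [← e1 1]; exact hd 1
  have hE15 : X 1 5 = MYhat 1 5 := by rw [← e2 1]; exact h12
  have hE20 : X 2 0 = MYhat 2 0 := by rw [hsym 2 0]; exact h02
  have hE21 : X 2 1 = MYhat 2 1 := by rw [hsym 2 1]; exact h12
  have hE22 : X 2 2 = MYhat 2 2 := by exact hd 2
  have hE23 : X 2 3 = MYhat 2 3 := by rw [← e0 2]; rw [hsym 2 0]; exact h02
  have hE24 : X 2 4 = MYhat 2 4 := by rw [← e1 2]; rw [hsym 2 1]; exact h12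
  have hE25 : X 2 5 = MYhat 2 5 := by rw [← e2 2]; exact hd 2
  have hE30 : X 3 0 = MYhat 3 0 := by rw [hsym 3 0]; rw [← e0 0]; exact hd 0
  have hE31 : X 3 1 = MYhat 3 1 := by rw [hsym 3 1]; rw [← e0 1]; rw [hsym 1 0]; exact h01
  have hE32 : X 3 2 = MYhat 3 2 := by rw [hsym 3 2]; rw [← e0 2]; rw [hsym 2 0]; exact h02
  have hE33 : X 3 3 = MYhat 3 3 := by rw [← e0 3]; rw [hsym 3 0]; rw [← e0 0]; exact hd 0
  have hE34 : X 3 4 = MYhat 3 4 := by rw [← e1 3]; rw [hsym 3 1]; rw [← e0 1]; rw [hsym 1 0]; exact h01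
  have hE35 : X 3 5 = MYhat 3 5 := by rw [← e2 3]; rw [hsym 3 2]; rw [← e0 2]; rw [hsym 2 0]; exact h02
  have hE40 : X 4 0 = MYhat 4 0 := by rw [hsym 4 0]; rw [← e1 0]; exact h01
  have hE41 : X 4 1 = MYhat 4 1 := by rw [hsym 4 1]; rw [← e1 1]; exact hd 1
  have hE42 : X 4 2 = MYhat 4 2 := by rw [hsym 4 2]; rw [← e1 2]; rw [hsym 2 1]; exact h12
  have hE43 : X 4 3 = MYhat 4 3 := by rw [← e0 4]; rw [hsym 4 0]; rw [← e1 0]; exact h01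
  have hE44 : X 4 4 = MYhat 4 4 := by rw [← e1 4]; rw [hsym 4 1]; rw [← e1 1]; exact hd 1
  have hE45 : X 4 5 = MYhat 4 5 := by rw [← e2 4]; rw [hsym 4 2]; rw [← e1 2]; rw [hsym 2 1]; exact h12
  have hE50 : X 5 0 = MYhat 5 0 := by rw [hsym 5 0]; rw [← e2 0]; exact h02
  have hE51 : X 5 1 = MYhat 5 1 := by rw [hsym 5 1]; rw [← e2 1]; exact h12
  have hE52 : X 5 2 = MYhat 5 2 := by rw [hsym 5 2]; rw [← e2 2]; exact hd 2
  have hE53 : X 5 3 = MYhat 5 3 := by rw [← e0 5]; rw [hsym 5 0]; rw [← e2 0]; exact h02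
  have hE54 : X 5 4 = MYhat 5 4 := by rw [← e1 5]; rw [hsym 5 1]; rw [← e2 1]; exact h12
  have hE55 : X 5 5 = MYhat 5 5 := by rw [← e2 5]; rw [hsym 5 2]; rw [← e2 2]; exact hd 2
  ext i j
  fin_cases i <;> fin_cases j <;> assumption

lemma uniq (X : Matrix (Fin 6) (Fin 6) ℝ) (h : IsPSDCompletion33 X MY) : X = MYhat := by
  obtain ⟨hPSD, hd, h03, h04, h05, h13, h14, h15, h23, h24, h25⟩ := h
  have hsym : ∀ i j, X i j = X j i := fun i j => by
    have := hPSD.1.apply i j; simpa using this.symm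
  have h03' : X 0 3 = (1:ℝ) := h03
  have h14' : X 1 4 = (1:ℝ) := h14
  have h25' : X 2 5 = (1:ℝ) := h25
  have h04' : X 0 4 = (0:ℝ) := h04
  have h05' : X 0 5 = 1/Real.sqrt 2 := h05
  have h15' : X 1 5 = 1/Real.sqrt 2 := h15
  have e0 := ones_force hPSD hd h03'
  have e1 := ones_force hPSD hd h14'
  have e2 := ones_force hPSD hd h25'
  exact entries_done X hsym hd e0 e1 e2 ((e1 0).trans h04') ((e2 0).trans h05')
    ((e2 1).trans h15')

lemma part1 : IsPSDCompletion33 MYhat MY := by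
  refine ⟨myhat_psd, fun i => ?_, rfl, rfl, rfl, rfl, rfl, rfl, rfl, rfl, rfl⟩
  fin_cases i <;> rfl

noncomputable def gvec (u v : Fin 3 → EuclideanSpace ℝ (Fin 6)) :
    Fin 6 → EuclideanSpace ℝ (Fin 6) := ![u 0, u 1, u 2, v 0, v 1, v 2]

noncomputable def Gram (u v : Fin 3 → EuclideanSpace ℝ (Fin 6)) :
    Matrix (Fin 6) (Fin 6) ℝ :=
  Matrix.of fun i j => ⟪gvec u v i, gvec u v j⟫

lemma gram_psd (u v : Fin 3 → EuclideanSpace ℝ (Fin 6)) : (Gram u v).PosSemidef := by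
  have h : Gram u v =
      (Matrix.of fun (k : Fin 6) (i : Fin 6) => gvec u v i k)ᴴ *
      (Matrix.of fun (k : Fin 6) (i : Fin 6) => gvec u v i k) := by
    ext i j
    simp [Gram, Matrix.mul_apply, Matrix.conjTranspose_apply, PiLp.inner_apply,
      RCLike.inner_apply, conj_trivial]
    exact Finset.sum_congr rfl fun _ _ => mul_comm _ _
  rw [h]
  exact Matrix.posSemidef_conjTranspose_mul_self _

lemma norm_one_inner_self {z : EuclideanSpace ℝ (Fin 6)} (hz : ‖z‖ = 1) : ⟪z, z⟫ = (1:ℝ) := by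
  rw [real_inner_self_eq_norm_mul_norm, hz]; norm_num

lemma gram_diag (u v : Fin 3 → EuclideanSpace ℝ (Fin 6))
    (hu : ∀ x, ‖u x‖ = 1) (hv : ∀ y, ‖v y‖ = 1) : ∀ i, Gram u v i i = 1 := by
  have g0 : Gram u v 0 0 = 1 := norm_one_inner_self (hu 0)
  have g1 : Gram u v 1 1 = 1 := norm_one_inner_self (hu 1)
  have g2 : Gram u v 2 2 = 1 := norm_one_inner_self (hu 2)
  have g3 : Gram u v 3 3 = 1 := norm_one_inner_self (hv 0)
  have g4 : Gram u v 4 4 = 1 := norm_one_inner_self (hv 1)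
  have g5 : Gram u v 5 5 = 1 := norm_one_inner_self (hv 2)
  intro i; fin_cases i <;> assumption

lemma gram_forced (G : Matrix (Fin 6) (Fin 6) ℝ) (hPSD : G.PosSemidef) (hd : ∀ i, G i i = 1)
    (q03 : star ![(1:ℝ),0,0,-1,0,0] ⬝ᵥ G *ᵥ ![(1:ℝ),0,0,-1,0,0] = 0)
    (q14 : star ![(0:ℝ),1,0,0,-1,0] ⬝ᵥ G *ᵥ ![(0:ℝ),1,0,0,-1,0] = 0)
    (q25 : star ![(0:ℝ),0,1,0,0,-1] ⬝ᵥ G *ᵥ ![(0:ℝ),0,1,0,0,-1] = 0)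
    (q4 : star ![1/Real.sqrt 2, 1/Real.sqrt 2, -1, (0:ℝ), 0, 0] ⬝ᵥ
          G *ᵥ ![1/Real.sqrt 2, 1/Real.sqrt 2, -1, (0:ℝ), 0, 0] = 0) :
    G = MYhat := by
  have hsym : ∀ i j, G i j = G j i := fun i j => by
    have := hPSD.1.apply i j; simpa using this.symm
  have k03 := (hPSD.dotProduct_mulVec_zero_iff _).mp q03
  have k14 := (hPSD.dotProduct_mulVec_zero_iff _).mp q14
  have k25 := (hPSD.dotProduct_mulVec_zero_iff _).mp q25
  have k4 := (hPSD.dotProduct_mulVec_zero_iff _).mp q4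
  have e0 : ∀ k, G k 0 = G k 3 := fun k => by
    have h := congrFun k03 k
    simp only [Matrix.mulVec, dotProduct, Fin.sum_univ_six, cv0, cv1, cv2, cv3, cv4, cv5,
      Pi.zero_apply, mul_zero, mul_one, mul_neg, add_zero, zero_add] at h
    linarith
  have e1 : ∀ k, G k 1 = G k 4 := fun k => by
    have h := congrFun k14 k
    simp only [Matrix.mulVec, dotProduct, Fin.sum_univ_six, cv0, cv1, cv2, cv3, cv4, cv5,
      Pi.zero_apply, mul_zero, mul_one, mul_neg, add_zero, zero_add] at h
    linarith
  have e2 : ∀ k, G k 2 = G k 5 := fun k => by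
    have h := congrFun k25 k
    simp only [Matrix.mulVec, dotProduct, Fin.sum_univ_six, cv0, cv1, cv2, cv3, cv4, cv5,
      Pi.zero_apply, mul_zero, mul_one, mul_neg, add_zero, zero_add] at h
    linarith
  have w40 := congrFun k4 0
  have w41 := congrFun k4 1
  have w42 := congrFun k4 2
  simp only [Matrix.mulVec, dotProduct, Fin.sum_univ_six, cv0, cv1, cv2, cv3, cv4, cv5,
    Pi.zero_apply, mul_zero, mul_one, mul_neg, add_zero, zero_add, hd 0, hd 1, hd 2]
    at w40 w41 w42
  rw [hsym 1 0] at w41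
  rw [hsym 2 0, hsym 2 1] at w42
  have h01 : G 0 1 = 0 := by
    linear_combination (1/Real.sqrt 2)*w40 + (1/Real.sqrt 2)*w41 + w42 - (2 + 2*G 0 1)*hhalf
  have h02 : G 0 2 = 1/Real.sqrt 2 := by
    linear_combination (-1)*w40 + (1/Real.sqrt 2)*h01
  have h12 : G 1 2 = 1/Real.sqrt 2 := by
    linear_combination (-1)*w41 + (1/Real.sqrt 2)*h01
  exact entries_done G hsym hd e0 e1 e2 h01 h02 h12

noncomputable def uMY : Fin 3 → EuclideanSpace ℝ (Fin 6) :=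
  ![WithLp.toLp 2 ![1,0,0,0,0,0], WithLp.toLp 2 ![0,1,0,0,0,0], WithLp.toLp 2 ![1/Real.sqrt 2, 1/Real.sqrt 2, 0,0,0,0]]

lemma uMY_norm : ∀ x, ‖uMY x‖ = 1 := by
  have n0 : ‖uMY 0‖ = 1 := by
    rw [EuclideanSpace.norm_eq]
    simp only [Fin.sum_univ_six, Real.norm_eq_abs, sq_abs]
    rw [show uMY 0 = ![(1:ℝ),0,0,0,0,0] from rfl]
    simp only [cv0, cv1, cv2, cv3, cv4, cv5]
    norm_num
  have n1 : ‖uMY 1‖ = 1 := by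
    rw [EuclideanSpace.norm_eq]
    simp only [Fin.sum_univ_six, Real.norm_eq_abs, sq_abs]
    rw [show uMY 1 = ![(0:ℝ),1,0,0,0,0] from rfl]
    simp only [cv0, cv1, cv2, cv3, cv4, cv5]
    norm_num
  have n2 : ‖uMY 2‖ = 1 := by
    rw [EuclideanSpace.norm_eq]
    simp only [Fin.sum_univ_six, Real.norm_eq_abs, sq_abs]
    rw [show uMY 2 = ![1/Real.sqrt 2, 1/Real.sqrt 2, (0:ℝ),0,0,0] from rfl]
    simp only [cv0, cv1, cv2, cv3, cv4, cv5]
    rw [show (1/Real.sqrt 2)^2 = 1/2 by rw [sq]; exact hhalf]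
    norm_num
  intro x; fin_cases x <;> assumption

lemma uMY_inner : ∀ x y, MY x y = ⟪uMY x, uMY y⟫ := by
  have base : ∀ a b : Fin 3, ⟪uMY a, uMY b⟫ =
      uMY a 0 * uMY b 0 + uMY a 1 * uMY b 1 + uMY a 2 * uMY b 2
      + uMY a 3 * uMY b 3 + uMY a 4 * uMY b 4 + uMY a 5 * uMY b 5 := by
    intro a b
    simp [PiLp.inner_apply, Fin.sum_univ_six, RCLike.inner_apply, conj_trivial]
    ring
  have i00 : MY 0 0 = ⟪uMY 0, uMY 0⟫ := by
    rw [base 0 0, show MY 0 0 = (1:ℝ) from rfl]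
    norm_num [show uMY 0 = ![(1:ℝ),0,0,0,0,0] from rfl, show uMY 1 = ![(0:ℝ),1,0,0,0,0] from rfl,
      show uMY 2 = ![1/Real.sqrt 2, 1/Real.sqrt 2, (0:ℝ),0,0,0] from rfl,
      cv0, cv1, cv2, cv3, cv4, cv5]
  have i01 : MY 0 1 = ⟪uMY 0, uMY 1⟫ := by
    rw [base 0 1, show MY 0 1 = (0:ℝ) from rfl]
    norm_num [show uMY 0 = ![(1:ℝ),0,0,0,0,0] from rfl, show uMY 1 = ![(0:ℝ),1,0,0,0,0] from rfl,
      show uMY 2 = ![1/Real.sqrt 2, 1/Real.sqrt 2, (0:ℝ),0,0,0] from rfl,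
      cv0, cv1, cv2, cv3, cv4, cv5]
  have i02 : MY 0 2 = ⟪uMY 0, uMY 2⟫ := by
    rw [base 0 2, show MY 0 2 = (1/Real.sqrt 2:ℝ) from rfl]
    norm_num [show uMY 0 = ![(1:ℝ),0,0,0,0,0] from rfl, show uMY 1 = ![(0:ℝ),1,0,0,0,0] from rfl,
      show uMY 2 = ![1/Real.sqrt 2, 1/Real.sqrt 2, (0:ℝ),0,0,0] from rfl,
      cv0, cv1, cv2, cv3, cv4, cv5]
  have i10 : MY 1 0 = ⟪uMY 1, uMY 0⟫ := by
    rw [base 1 0, show MY 1 0 = (0:ℝ) from rfl]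
    norm_num [show uMY 0 = ![(1:ℝ),0,0,0,0,0] from rfl, show uMY 1 = ![(0:ℝ),1,0,0,0,0] from rfl,
      show uMY 2 = ![1/Real.sqrt 2, 1/Real.sqrt 2, (0:ℝ),0,0,0] from rfl,
      cv0, cv1, cv2, cv3, cv4, cv5]
  have i11 : MY 1 1 = ⟪uMY 1, uMY 1⟫ := by
    rw [base 1 1, show MY 1 1 = (1:ℝ) from rfl]
    norm_num [show uMY 0 = ![(1:ℝ),0,0,0,0,0] from rfl, show uMY 1 = ![(0:ℝ),1,0,0,0,0] from rfl,
      show uMY 2 = ![1/Real.sqrt 2, 1/Real.sqrt 2, (0:ℝ),0,0,0] from rfl,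
      cv0, cv1, cv2, cv3, cv4, cv5]
  have i12 : MY 1 2 = ⟪uMY 1, uMY 2⟫ := by
    rw [base 1 2, show MY 1 2 = (1/Real.sqrt 2:ℝ) from rfl]
    norm_num [show uMY 0 = ![(1:ℝ),0,0,0,0,0] from rfl, show uMY 1 = ![(0:ℝ),1,0,0,0,0] from rfl,
      show uMY 2 = ![1/Real.sqrt 2, 1/Real.sqrt 2, (0:ℝ),0,0,0] from rfl,
      cv0, cv1, cv2, cv3, cv4, cv5]
  have i20 : MY 2 0 = ⟪uMY 2, uMY 0⟫ := by
    rw [base 2 0, show MY 2 0 = (1/Real.sqrt 2:ℝ) from rfl]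
    norm_num [show uMY 0 = ![(1:ℝ),0,0,0,0,0] from rfl, show uMY 1 = ![(0:ℝ),1,0,0,0,0] from rfl,
      show uMY 2 = ![1/Real.sqrt 2, 1/Real.sqrt 2, (0:ℝ),0,0,0] from rfl,
      cv0, cv1, cv2, cv3, cv4, cv5]
  have i21 : MY 2 1 = ⟪uMY 2, uMY 1⟫ := by
    rw [base 2 1, show MY 2 1 = (1/Real.sqrt 2:ℝ) from rfl]
    norm_num [show uMY 0 = ![(1:ℝ),0,0,0,0,0] from rfl, show uMY 1 = ![(0:ℝ),1,0,0,0,0] from rfl,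
      show uMY 2 = ![1/Real.sqrt 2, 1/Real.sqrt 2, (0:ℝ),0,0,0] from rfl,
      cv0, cv1, cv2, cv3, cv4, cv5]
  have i22 : MY 2 2 = ⟪uMY 2, uMY 2⟫ := by
    rw [base 2 2, show MY 2 2 = (1:ℝ) from rfl]
    rw [show uMY 2 = ![1/Real.sqrt 2, 1/Real.sqrt 2, (0:ℝ),0,0,0] from rfl]
    simp only [cv0, cv1, cv2, cv3, cv4, cv5]
    linear_combination (-2)*hhalf
  intro x y; fin_cases x <;> fin_cases y <;> assumption

lemma my_mem : MY ∈ Cor 3 3 :=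
  ⟨uMY, uMY, uMY_norm, uMY_norm, uMY_inner⟩

theorem stmt17 :
    IsPSDCompletion33 MYhat MY ∧
    (∀ X, IsPSDCompletion33 X MY → X = MYhat) ∧
    IsExtremePt (Cor 3 3) MY := by
  refine ⟨part1, fun X hX => uniq X hX, my_mem, ?_⟩
  intro C₁ hC₁ C₂ hC₂ l hl0 hl1 heq
  obtain ⟨u₁, v₁, hu₁, hv₁, hC1⟩ := hC₁
  obtain ⟨u₂, v₂, hu₂, hv₂, hC2⟩ := hC₂
  have hP1 := gram_psd u₁ v₁
  have hP2 := gram_psd u₂ v₂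
  have hd1 := gram_diag u₁ v₁ hu₁ hv₁
  have hd2 := gram_diag u₂ v₂ hu₂ hv₂
  have hcomb : (l • Gram u₁ v₁ + (1-l) • Gram u₂ v₂) = MYhat := by
    apply uniq
    refine ⟨PosSemidef.of_dotProduct_mulVec_nonneg ?_ ?_, ?_, ?_, ?_, ?_, ?_, ?_, ?_, ?_, ?_, ?_⟩
    · show _ = _
      rw [Matrix.conjTranspose_add, Matrix.conjTranspose_smul, Matrix.conjTranspose_smul,
        hP1.1, hP2.1]
      simp
    · intro x
      rw [Matrix.add_mulVec, Matrix.smul_mulVec, Matrix.smul_mulVec,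
        dotProduct_add, dotProduct_smul, dotProduct_smul,
        smul_eq_mul, smul_eq_mul]
      have := hP1.dotProduct_mulVec_nonneg x
      have := hP2.dotProduct_mulVec_nonneg x
      have h1l : (0:ℝ) ≤ 1 - l := by linarith
      positivity
    · intro i
      simp only [Matrix.add_apply, Matrix.smul_apply, hd1 i, hd2 i, smul_eq_mul]
      ring
    · have a1 : Gram u₁ v₁ 0 3 = C₁ 0 0 := (hC1 0 0).symm
      have a2 : Gram u₂ v₂ 0 3 = C₂ 0 0 := (hC2 0 0).symm
      simp only [Matrix.add_apply, Matrix.smul_apply, a1, a2, smul_eq_mul]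
      rw [heq]
      simp [Matrix.add_apply, Matrix.smul_apply]
    · have a1 : Gram u₁ v₁ 0 4 = C₁ 0 1 := (hC1 0 1).symm
      have a2 : Gram u₂ v₂ 0 4 = C₂ 0 1 := (hC2 0 1).symm
      simp only [Matrix.add_apply, Matrix.smul_apply, a1, a2, smul_eq_mul]
      rw [heq]
      simp [Matrix.add_apply, Matrix.smul_apply]
    · have a1 : Gram u₁ v₁ 0 5 = C₁ 0 2 := (hC1 0 2).symm
      have a2 : Gram u₂ v₂ 0 5 = C₂ 0 2 := (hC2 0 2).symm
      simp only [Matrix.add_apply, Matrix.smul_apply, a1, a2, smul_eq_mul]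
      rw [heq]
      simp [Matrix.add_apply, Matrix.smul_apply]
    · have a1 : Gram u₁ v₁ 1 3 = C₁ 1 0 := (hC1 1 0).symm
      have a2 : Gram u₂ v₂ 1 3 = C₂ 1 0 := (hC2 1 0).symm
      simp only [Matrix.add_apply, Matrix.smul_apply, a1, a2, smul_eq_mul]
      rw [heq]
      simp [Matrix.add_apply, Matrix.smul_apply]
    · have a1 : Gram u₁ v₁ 1 4 = C₁ 1 1 := (hC1 1 1).symm
      have a2 : Gram u₂ v₂ 1 4 = C₂ 1 1 := (hC2 1 1).symm
      simp only [Matrix.add_apply, Matrix.smul_apply, a1, a2, smul_eq_mul]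
      rw [heq]
      simp [Matrix.add_apply, Matrix.smul_apply]
    · have a1 : Gram u₁ v₁ 1 5 = C₁ 1 2 := (hC1 1 2).symm
      have a2 : Gram u₂ v₂ 1 5 = C₂ 1 2 := (hC2 1 2).symm
      simp only [Matrix.add_apply, Matrix.smul_apply, a1, a2, smul_eq_mul]
      rw [heq]
      simp [Matrix.add_apply, Matrix.smul_apply]
    · have a1 : Gram u₁ v₁ 2 3 = C₁ 2 0 := (hC1 2 0).symm
      have a2 : Gram u₂ v₂ 2 3 = C₂ 2 0 := (hC2 2 0).symm
      simp only [Matrix.add_apply, Matrix.smul_apply, a1, a2, smul_eq_mul]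
      rw [heq]
      simp [Matrix.add_apply, Matrix.smul_apply]
    · have a1 : Gram u₁ v₁ 2 4 = C₁ 2 1 := (hC1 2 1).symm
      have a2 : Gram u₂ v₂ 2 4 = C₂ 2 1 := (hC2 2 1).symm
      simp only [Matrix.add_apply, Matrix.smul_apply, a1, a2, smul_eq_mul]
      rw [heq]
      simp [Matrix.add_apply, Matrix.smul_apply]
    · have a1 : Gram u₁ v₁ 2 5 = C₁ 2 2 := (hC1 2 2).symm
      have a2 : Gram u₂ v₂ 2 5 = C₂ 2 2 := (hC2 2 2).symm
      simp only [Matrix.add_apply, Matrix.smul_apply, a1, a2, smul_eq_mul]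
      rw [heq]
      simp [Matrix.add_apply, Matrix.smul_apply]
  have quadzero : ∀ κ : Fin 6 → ℝ, (star κ ⬝ᵥ MYhat *ᵥ κ = 0) →
      star κ ⬝ᵥ Gram u₁ v₁ *ᵥ κ = 0 ∧ star κ ⬝ᵥ Gram u₂ v₂ *ᵥ κ = 0 := by
    intro κ hκ
    have hsplit : l * (star κ ⬝ᵥ Gram u₁ v₁ *ᵥ κ)
        + (1-l) * (star κ ⬝ᵥ Gram u₂ v₂ *ᵥ κ) = 0 := by
      rw [← hκ, ← hcomb, Matrix.add_mulVec, Matrix.smul_mulVec, Matrix.smul_mulVec,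
        dotProduct_add, dotProduct_smul, dotProduct_smul,
        smul_eq_mul, smul_eq_mul]
    have ha := hP1.dotProduct_mulVec_nonneg κ
    have hb := hP2.dotProduct_mulVec_nonneg κ
    have h1l : (0:ℝ) ≤ 1 - l := by linarith
    constructor
    · by_contra hne
      have ha' : 0 < star κ ⬝ᵥ Gram u₁ v₁ *ᵥ κ := lt_of_le_of_ne ha (Ne.symm hne)
      nlinarith [mul_pos hl0 ha', mul_nonneg h1l hb]
    · by_contra hne
      have hb' : 0 < star κ ⬝ᵥ Gram u₂ v₂ *ᵥ κ := lt_of_le_of_ne hb (Ne.symm hne)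
      have h1l' : (0:ℝ) < 1 - l := by linarith
      nlinarith [mul_pos h1l' hb', mul_nonneg (le_of_lt hl0) ha]
  have z03 : star ![(1:ℝ),0,0,-1,0,0] ⬝ᵥ MYhat *ᵥ ![(1:ℝ),0,0,-1,0,0] = 0 := by
    rw [myhat_quad]
    simp only [cv0, cv1, cv2, cv3, cv4, cv5]
    ring
  have z14 : star ![(0:ℝ),1,0,0,-1,0] ⬝ᵥ MYhat *ᵥ ![(0:ℝ),1,0,0,-1,0] = 0 := by
    rw [myhat_quad]
    simp only [cv0, cv1, cv2, cv3, cv4, cv5]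
    ring
  have z25 : star ![(0:ℝ),0,1,0,0,-1] ⬝ᵥ MYhat *ᵥ ![(0:ℝ),0,1,0,0,-1] = 0 := by
    rw [myhat_quad]
    simp only [cv0, cv1, cv2, cv3, cv4, cv5]
    ring
  have z4 : star ![1/Real.sqrt 2, 1/Real.sqrt 2, -1, (0:ℝ), 0, 0] ⬝ᵥ
      MYhat *ᵥ ![1/Real.sqrt 2, 1/Real.sqrt 2, -1, (0:ℝ), 0, 0] = 0 := by
    rw [myhat_quad]
    simp only [cv0, cv1, cv2, cv3, cv4, cv5]
    ring
  have hG1 : Gram u₁ v₁ = MYhat :=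
    gram_forced _ hP1 hd1 (quadzero _ z03).1 (quadzero _ z14).1 (quadzero _ z25).1
      (quadzero _ z4).1
  have hG2 : Gram u₂ v₂ = MYhat :=
    gram_forced _ hP2 hd2 (quadzero _ z03).2 (quadzero _ z14).2 (quadzero _ z25).2
      (quadzero _ z4).2
  constructor
  · ext x y
    have c00 : C₁ 0 0 = MY 0 0 := by
      rw [hC1 0 0, show (⟪u₁ 0, v₁ 0⟫:ℝ) = Gram u₁ v₁ 0 3 from rfl, hG1]
      rfl
    have c01 : C₁ 0 1 = MY 0 1 := by
      rw [hC1 0 1, show (⟪u₁ 0, v₁ 1⟫:ℝ) = Gram u₁ v₁ 0 4 from rfl, hG1]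
      rfl
    have c02 : C₁ 0 2 = MY 0 2 := by
      rw [hC1 0 2, show (⟪u₁ 0, v₁ 2⟫:ℝ) = Gram u₁ v₁ 0 5 from rfl, hG1]
      rfl
    have c10 : C₁ 1 0 = MY 1 0 := by
      rw [hC1 1 0, show (⟪u₁ 1, v₁ 0⟫:ℝ) = Gram u₁ v₁ 1 3 from rfl, hG1]
      rfl
    have c11 : C₁ 1 1 = MY 1 1 := by
      rw [hC1 1 1, show (⟪u₁ 1, v₁ 1⟫:ℝ) = Gram u₁ v₁ 1 4 from rfl, hG1]
      rfl
    have c12 : C₁ 1 2 = MY 1 2 := by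
      rw [hC1 1 2, show (⟪u₁ 1, v₁ 2⟫:ℝ) = Gram u₁ v₁ 1 5 from rfl, hG1]
      rfl
    have c20 : C₁ 2 0 = MY 2 0 := by
      rw [hC1 2 0, show (⟪u₁ 2, v₁ 0⟫:ℝ) = Gram u₁ v₁ 2 3 from rfl, hG1]
      rfl
    have c21 : C₁ 2 1 = MY 2 1 := by
      rw [hC1 2 1, show (⟪u₁ 2, v₁ 1⟫:ℝ) = Gram u₁ v₁ 2 4 from rfl, hG1]
      rfl
    have c22 : C₁ 2 2 = MY 2 2 := by
      rw [hC1 2 2, show (⟪u₁ 2, v₁ 2⟫:ℝ) = Gram u₁ v₁ 2 5 from rfl, hG1]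
      rfl
    fin_cases x <;> fin_cases y <;> assumption
  · ext x y
    have c00 : C₂ 0 0 = MY 0 0 := by
      rw [hC2 0 0, show (⟪u₂ 0, v₂ 0⟫:ℝ) = Gram u₂ v₂ 0 3 from rfl, hG2]
      rfl
    have c01 : C₂ 0 1 = MY 0 1 := by
      rw [hC2 0 1, show (⟪u₂ 0, v₂ 1⟫:ℝ) = Gram u₂ v₂ 0 4 from rfl, hG2]
      rfl
    have c02 : C₂ 0 2 = MY 0 2 := by
      rw [hC2 0 2, show (⟪u₂ 0, v₂ 2⟫:ℝ) = Gram u₂ v₂ 0 5 from rfl, hG2]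
      rfl
    have c10 : C₂ 1 0 = MY 1 0 := by
      rw [hC2 1 0, show (⟪u₂ 1, v₂ 0⟫:ℝ) = Gram u₂ v₂ 1 3 from rfl, hG2]
      rfl
    have c11 : C₂ 1 1 = MY 1 1 := by
      rw [hC2 1 1, show (⟪u₂ 1, v₂ 1⟫:ℝ) = Gram u₂ v₂ 1 4 from rfl, hG2]
      rfl
    have c12 : C₂ 1 2 = MY 1 2 := by
      rw [hC2 1 2, show (⟪u₂ 1, v₂ 2⟫:ℝ) = Gram u₂ v₂ 1 5 from rfl, hG2]
      rfl
    have c20 : C₂ 2 0 = MY 2 0 := by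
      rw [hC2 2 0, show (⟪u₂ 2, v₂ 0⟫:ℝ) = Gram u₂ v₂ 2 3 from rfl, hG2]
      rfl
    have c21 : C₂ 2 1 = MY 2 1 := by
      rw [hC2 2 1, show (⟪u₂ 2, v₂ 1⟫:ℝ) = Gram u₂ v₂ 2 4 from rfl, hG2]
      rfl
    have c22 : C₂ 2 2 = MY 2 2 := by
      rw [hC2 2 2, show (⟪u₂ 2, v₂ 2⟫:ℝ) = Gram u₂ v₂ 2 5 from rfl, hG2]
      rfl
    fin_cases x <;> fin_cases y <;> assumption
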